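/- arXiv:2210.00571 — 8 statements merged into one kernel-verified Lean document; each statement's English description precedes it below -/
import Mathlib

section
/- Let m be a positive integer and let y_0, y_1, ..., y_m be real numbers satisfying sum_{k=1}^{m} (y_k - y_{k-1}^2 - 1)^2 < 1. Then y_m > y_0^{2^m}. -/
theorem stmt_1 (m : ℕ) (hm : 0 < m) (y : ℕ → ℝ)
    (h : ∑ k ∈ Finset.Icc 1 m, (y k - (y (k - 1)) ^ 2 - 1) ^ 2 < 1) :
    y m > (y 0) ^ (2 ^ m) := by
  have key : ∀ k, 1 ≤ k → k ≤ m → y k > (y (k - 1)) ^ 2 := by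
    intro k hk1 hkm
    have hmem : k ∈ Finset.Icc 1 m := Finset.mem_Icc.mpr ⟨hk1, hkm⟩
    have hterm : (y k - (y (k - 1)) ^ 2 - 1) ^ 2 < 1 :=
      lt_of_le_of_lt (Finset.single_le_sum (f := fun i => (y i - (y (i - 1)) ^ 2 - 1) ^ 2) (fun i _ => sq_nonneg _) hmem) h
    nlinarith [hterm]
  have main : ∀ k, 1 ≤ k → k ≤ m → y k > (y 0) ^ (2 ^ k) := by
    intro k hk1
    induction k, hk1 using Nat.le_induction with
    | base =>
      intro h1
      have := key 1 le_rfl h1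
      simpa using this
    | succ n hn ih =>
      intro hle
      have h1 := key (n + 1) (by omega) (by omega)
      have h2 := ih (by omega)
      have heven : Even (2 ^ n) := by
        exact (Nat.even_pow.mpr ⟨even_two, by omega⟩)
      have ha : (0 : ℝ) ≤ (y 0) ^ (2 ^ n) := heven.pow_nonneg _
      have hrw : (y 0) ^ (2 ^ (n + 1)) = ((y 0) ^ (2 ^ n)) ^ 2 := by
        rw [← pow_mul, ← pow_succ]
      simp only [Nat.add_sub_cancel] at h1
      rw [hrw]
      nlinarith [h1, h2, ha]
  exact main m hm le_rfl
end

section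
/- Let y_0 be a real number with 0 < y_0 < 1/2, m a positive integer, and y_1, ..., y_m real numbers with y_m in [-1,1] satisfying 400 * sum_{k=1}^{m} (y_k - y_{k-1}^2)^2 < y_m^2. Then 0 < y_m^2 and y_m^2 <= y_0^{(5/6) * 2^m}. -/
lemma stmt_4_base (a : ℝ) (h0 : 0 < a) (h1 : a < 1 / 2) :
    ((5/4) * a)^2 ≤ a ^ ((5:ℝ)/6) := by
  have h56 : a ≤ a ^ ((5:ℝ)/6) := by
    calc a = a ^ (1:ℝ) := (Real.rpow_one _).symm
      _ ≤ a ^ ((5:ℝ)/6) :=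
          Real.rpow_le_rpow_of_exponent_ge h0 (by linarith) (by norm_num)
  nlinarith

lemma stmt_4_rw (a : ℝ) (h0 : 0 < a) (m : ℕ) :
    a ^ ((5 / 6 : ℝ) * 2 ^ m) = (a ^ ((5:ℝ)/6))^(2^m : ℕ) := by
  rw [← Real.rpow_natCast (a ^ ((5:ℝ)/6)) (2^m), ← Real.rpow_mul h0.le]
  norm_num


theorem stmt_4 (m : ℕ) (hm : 0 < m) (y : ℕ → ℝ)
    (h0 : 0 < y 0) (h1 : y 0 < 1 / 2) (hym : y m ∈ Set.Icc (-1 : ℝ) 1)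
    (h : 400 * ∑ k ∈ Finset.Icc 1 m, (y k - (y (k - 1)) ^ 2) ^ 2 < (y m) ^ 2) :
    0 < (y m) ^ 2 ∧ (y m) ^ 2 ≤ (y 0) ^ ((5 / 6 : ℝ) * 2 ^ m) := by
  have hsum : (0:ℝ) ≤ ∑ k ∈ Finset.Icc 1 m, (y k - (y (k - 1)) ^ 2) ^ 2 :=
    Finset.sum_nonneg fun i _ => sq_nonneg _
  have hpos : 0 < (y m)^2 := by nlinarith
  refine ⟨hpos, ?_⟩
  set t := |y m| with ht
  have htpos : 0 < t := abs_pos.2 (by intro h'; rw [h'] at hpos; simp at hpos)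
  have ht1 : t ≤ 1 := abs_le.2 ⟨hym.1, hym.2⟩
  have ht2 : t^2 = (y m)^2 := sq_abs _
  have step : ∀ k, 1 ≤ k → k ≤ m → |y k - (y (k-1))^2| < t/20 := by
    intro k hk1 hk2
    have hmem : k ∈ Finset.Icc 1 m := Finset.mem_Icc.2 ⟨hk1, hk2⟩
    have h1' : (y k - (y (k-1))^2)^2 ≤ ∑ j ∈ Finset.Icc 1 m, (y j - (y (j-1))^2)^2 :=
      Finset.single_le_sum (f := fun j => (y j - (y (j-1))^2)^2) (fun i _ => sq_nonneg _) hmem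
    have h2' : 400 * (y k - (y (k-1))^2)^2 < t^2 := by nlinarith
    nlinarith [sq_abs (y k - (y (k-1))^2), abs_nonneg (y k - (y (k-1))^2), htpos]
  have aux : ∀ d k, k + d ≤ m → |y k| < t/4 → |y (k+d)| < t/4 := by
    intro d
    induction d with
    | zero => intro k _ h'; simpa using h'
    | succ d ih =>
      intro k hkd h'
      have h1' : |y (k+d)| < t/4 := ih k (by omega) h'
      have h2' : |y (k+d+1) - (y (k+d))^2| < t/20 := by
        have := step (k+d+1) (by omega) (by omega)
        simpa using this
      have h3' : |y (k+d+1)| ≤ |y (k+d+1) - (y (k+d))^2| + (y (k+d))^2 := by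
        calc |y (k+d+1)| = |y (k+d+1) - (y (k+d))^2 + (y (k+d))^2| := by
              congr 1; ring
          _ ≤ |y (k+d+1) - (y (k+d))^2| + |(y (k+d))^2| := abs_add_le _ _
          _ = _ := by rw [abs_of_nonneg (sq_nonneg (y (k+d)))]
      have h5 : (y (k+d))^2 < (t/4)^2 := by
        nlinarith [sq_abs (y (k+d)), abs_nonneg (y (k+d)), htpos]
      have heq : k + (d+1) = k + d + 1 := by omega
      rw [heq]
      nlinarith [htpos, ht1]
  have low : ∀ k, k ≤ m → t/4 ≤ |y k| := by
    intro k hk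
    by_contra hc
    push_neg at hc
    have := aux (m - k) k (by omega) hc
    rw [show k + (m - k) = m by omega] at this
    rw [← ht] at this
    nlinarith
  have main : ∀ k, k ≤ m → (5/4) * |y k| ≤ ((5/4) * y 0)^(2^k) := by
    intro k
    induction k with
    | zero => intro _; norm_num [abs_of_pos h0]
    | succ k ih =>
      intro hk
      have ihk := ih (by omega)
      have hstep := step (k+1) (by omega) hk
      simp only [Nat.add_sub_cancel] at hstep
      have hlow := low (k+1) hk
      have htri : |y (k+1)| ≤ |y (k+1) - (y k)^2| + (y k)^2 := by
        calc |y (k+1)| = |y (k+1) - (y k)^2 + (y k)^2| := by congr 1; ring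
          _ ≤ |y (k+1) - (y k)^2| + |(y k)^2| := abs_add_le _ _
          _ = _ := by rw [abs_of_nonneg (sq_nonneg (y k))]
      have h54 : (5/4) * |y (k+1)| ≤ ((5/4) * |y k|)^2 := by
        nlinarith [sq_abs (y k), htri, hstep, hlow]
      have hsq : ((5/4) * |y k|)^2 ≤ (((5/4) * y 0)^(2^k))^2 := by
        apply pow_le_pow_left₀ (by positivity) ihk
      calc (5/4) * |y (k+1)| ≤ (((5/4) * y 0)^(2^k))^2 := le_trans h54 hsq
        _ = ((5/4) * y 0)^(2^(k+1)) := by rw [← pow_mul, pow_succ]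
  have hmain := main m le_rfl
  have hB : (0:ℝ) ≤ ((5/4) * y 0)^(2^m) := by positivity
  have htB : t ≤ ((5/4) * y 0)^(2^m) := by nlinarith
  have hfin : t^2 ≤ (((5/4) * y 0)^2)^(2^m) := by
    calc t^2 ≤ (((5/4) * y 0)^(2^m))^2 := by nlinarith
      _ = (((5/4) * y 0)^2)^(2^m) := by
          rw [← pow_mul, ← pow_mul, Nat.mul_comm]
  have hbase : ((5/4) * y 0)^2 ≤ y 0 ^ ((5:ℝ)/6) := stmt_4_base (y 0) h0 h1
  have hrw : (y 0) ^ ((5 / 6 : ℝ) * 2 ^ m) = (y 0 ^ ((5:ℝ)/6))^(2^m : ℕ) :=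
    stmt_4_rw (y 0) h0 m
  rw [← ht2, hrw]
  calc t^2 ≤ (((5/4) * y 0)^2)^(2^m) := hfin
    _ ≤ (y 0 ^ ((5:ℝ)/6))^(2^m) := pow_le_pow_left₀ (sq_nonneg _) hbase _
end

section
/- Let y_0 in (0,1/2), m >= 1, and y_1,...,y_m real with |y_m| <= 1 and 400 * sum_{k=1}^{m} (y_k - y_{k-1}^2)^2 < y_m^2. Then for every k in {1,...,m}, |y_k| >= |y_m|/2 and y_k > 0. -/
theorem stmt_5 (m : ℕ) (hm : 1 ≤ m) (y : ℕ → ℝ)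
    (h0 : 0 < y 0) (h1 : y 0 < 1 / 2) (hym : |y m| ≤ 1)
    (h : 400 * ∑ k ∈ Finset.Icc 1 m, (y k - (y (k - 1)) ^ 2) ^ 2 < (y m) ^ 2) :
    ∀ k ∈ Finset.Icc 1 m, |y m| / 2 ≤ |y k| ∧ 0 < y k := by
  have hsum : (0:ℝ) ≤ ∑ k ∈ Finset.Icc 1 m, (y k - (y (k - 1)) ^ 2) ^ 2 :=
    Finset.sum_nonneg fun i _ => sq_nonneg _
  have hym2 : (0:ℝ) < (y m) ^ 2 := lt_of_le_of_lt (by linarith) h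
  have hne : y m ≠ 0 := by intro hz; rw [hz] at hym2; simp at hym2
  have habs : 0 < |y m| := abs_pos.mpr hne
  have heps : ∀ k ∈ Finset.Icc 1 m, |y k - (y (k - 1)) ^ 2| < |y m| / 20 := by
    intro k hk
    have hterm : (y k - (y (k - 1)) ^ 2) ^ 2 ≤
        ∑ j ∈ Finset.Icc 1 m, (y j - (y (j - 1)) ^ 2) ^ 2 :=
      Finset.single_le_sum (f := fun j => (y j - (y (j - 1)) ^ 2) ^ 2) (fun i _ => sq_nonneg _) hk
    have h2 : |y k - (y (k - 1)) ^ 2| ^ 2 < (|y m| / 20) ^ 2 := by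
      rw [sq_abs, div_pow, sq_abs]
      linarith
    exact lt_of_pow_lt_pow_left₀ 2 (by positivity) h2
  have key : ∀ k ∈ Finset.Icc 1 m, |y m| / 2 ≤ |y k| := by
    by_contra hcon
    push_neg at hcon
    obtain ⟨k, hk, hlt⟩ := hcon
    rw [Finset.mem_Icc] at hk
    have hstep : ∀ j, k ≤ j → j ≤ m → |y j| < |y m| / 2 := by
      intro j
      induction j with
      | zero => intro hkj _; omega
      | succ n ih =>
        intro hkj hjm
        rcases eq_or_lt_of_le hkj with heq | hlt'
        · rw [← heq]; exact hlt
        · have hkn : k ≤ n := Nat.lt_succ_iff.mp hlt'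
          have hnm : n ≤ m := le_trans (Nat.le_succ n) hjm
          have hih := ih hkn hnm
          have hmem : n + 1 ∈ Finset.Icc 1 m := Finset.mem_Icc.mpr ⟨Nat.succ_le_succ (Nat.zero_le n), hjm⟩
          have he := heps (n + 1) hmem
          simp only [Nat.add_sub_cancel] at he
          have htri : |y (n + 1)| ≤ |(y n) ^ 2| + |y (n + 1) - (y n) ^ 2| := by
            calc |y (n + 1)| = |(y n) ^ 2 + (y (n + 1) - (y n) ^ 2)| := by ring_nf
            _ ≤ _ := abs_add_le _ _
          rw [abs_pow] at htri
          nlinarith [abs_nonneg (y n), abs_nonneg (y (n + 1))]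
    have := hstep m hk.2 le_rfl
    linarith
  intro k hk
  refine ⟨key k hk, ?_⟩
  have h1 := key k hk
  have h2 := abs_lt.mp (heps k hk)
  have hsq := sq_nonneg (y (k - 1))
  by_contra hpos
  push_neg at hpos
  rw [abs_of_nonpos hpos] at h1
  linarith
end

section
/- Let y_0 in (0,1/2), m >= 1, and y_1,...,y_m real with y_m in [-1,1] satisfying 400 * sum_{k=1}^{m} (y_k - y_{k-1}^2)^2 < y_m^2. Define x_k = log(y_k)/log(y_0) for k = 0,...,m. Then |x_k - 2*x_{k-1}| <= 1/6 for all k in {1,...,m}. -/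
private lemma aux_eps {a b : ℝ} (hb : 0 < b) (h : 400 * a ^ 2 ≤ b ^ 2) :
    -(b / 20) ≤ a ∧ a ≤ b / 20 := by
  constructor
  · nlinarith [sq_nonneg (a + b / 20)]
  · nlinarith [sq_nonneg (a - b / 20)]

set_option maxHeartbeats 1000000 in
theorem stmt_6 (m : ℕ) (hm : 1 ≤ m) (y : ℕ → ℝ)
    (h0 : 0 < y 0) (h1 : y 0 < 1 / 2) (hym : y m ∈ Set.Icc (-1 : ℝ) 1)
    (h : 400 * ∑ k ∈ Finset.Icc 1 m, (y k - (y (k - 1)) ^ 2) ^ 2 < (y m) ^ 2) :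
    ∀ k ∈ Finset.Icc 1 m,
      |Real.log (y k) / Real.log (y 0) - 2 * (Real.log (y (k - 1)) / Real.log (y 0))| ≤ 1 / 6 := by
  obtain ⟨hym1, hym2⟩ := hym
  have heps : ∀ k ∈ Finset.Icc 1 m, 400 * (y k - (y (k - 1)) ^ 2) ^ 2 ≤ (y m) ^ 2 := by
    intro k hk
    have hs := Finset.single_le_sum (f := fun i => (y i - (y (i - 1)) ^ 2) ^ 2)
      (fun i _ => sq_nonneg _) hk
    nlinarith [hs, h]
  have hmmem : m ∈ Finset.Icc 1 m := Finset.mem_Icc.mpr ⟨hm, le_refl m⟩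
  have hympos : 0 < y m := by
    rcases lt_trichotomy (y m) 0 with hlt | heq | hgt
    · exfalso
      have he := heps m hmmem
      nlinarith [he, sq_nonneg (y (m - 1)),
        mul_nonneg (neg_nonneg.mpr hlt.le) (sq_nonneg (y (m - 1))), mul_pos (neg_pos.mpr hlt) (neg_pos.mpr hlt)]
    · exfalso
      have hS : 0 ≤ ∑ k ∈ Finset.Icc 1 m, (y k - (y (k - 1)) ^ 2) ^ 2 :=
        Finset.sum_nonneg fun _ _ => sq_nonneg _
      have hz : (y m) ^ 2 = 0 := by rw [heq]; ring
      linarith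
    · exact hgt
  have key : ∀ j k, k + j = m → 9 / 10 * y m ≤ y k ∧ 0 < y k := by
    intro j
    induction j with
    | zero =>
      intro k hk
      simp only [Nat.add_zero] at hk
      subst hk
      exact ⟨by linarith, hympos⟩
    | succ j ih =>
      intro k hk
      have hk1 : (k + 1) + j = m := by omega
      obtain ⟨ihle, ihpos⟩ := ih (k + 1) hk1
      have hkmem : k + 1 ∈ Finset.Icc 1 m := Finset.mem_Icc.mpr ⟨by omega, by omega⟩
      have he := heps (k + 1) hkmem
      simp only [Nat.add_sub_cancel] at he
      have hub : y (k + 1) - (y k) ^ 2 ≤ y m / 20 := (aux_eps hympos he).2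
      have hsq : 81 / 100 * (y m) ^ 2 ≤ (y k) ^ 2 := by
        nlinarith [he, mul_nonneg hympos.le (by linarith : (0:ℝ) ≤ 1 - y m)]
      rcases Nat.eq_zero_or_pos k with hk0 | hkpos
      · subst hk0
        refine ⟨by nlinarith [hsq, h0, hympos], h0⟩
      · have hkmem2 : k ∈ Finset.Icc 1 m := Finset.mem_Icc.mpr ⟨hkpos, by omega⟩
        have he2 := heps k hkmem2
        have hklow : -(y m / 20) ≤ y k := by
          have := (aux_eps hympos he2).1
          nlinarith [sq_nonneg (y (k - 1))]
        have hle : 9 / 10 * y m ≤ y k := by nlinarith [hsq, hklow, hympos]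
        exact ⟨hle, by nlinarith [hle, hympos]⟩
  intro k hk
  obtain ⟨hk1, hk2⟩ := Finset.mem_Icc.mp hk
  obtain ⟨hble, hbpos⟩ := key (m - k) k (by omega)
  obtain ⟨hale, hapos⟩ := key (m - (k - 1)) (k - 1) (by omega)
  have he := heps k hk
  obtain ⟨hlb, hub⟩ := aux_eps hympos he
  have ha2 : 17 / 20 * y m ≤ (y (k - 1)) ^ 2 := by linarith
  have ha2pos : 0 < (y (k - 1)) ^ 2 := by positivity
  have hrat1 : y k / (y (k - 1)) ^ 2 ≤ 17 / 16 := by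
    rw [div_le_iff₀ ha2pos]
    linarith
  have hrat2 : (16 : ℝ) / 17 ≤ y k / (y (k - 1)) ^ 2 := by
    rw [le_div_iff₀ ha2pos]
    linarith
  have hlogdiv : Real.log (y k / (y (k - 1)) ^ 2)
      = Real.log (y k) - 2 * Real.log (y (k - 1)) := by
    rw [Real.log_div hbpos.ne' (ne_of_gt ha2pos), Real.log_pow]
    push_cast; ring
  have hlog1716 : Real.log (17 / 16) ≤ Real.log 2 / 6 := by
    have h6 : (6 : ℝ) * Real.log (17 / 16 : ℝ) = Real.log ((17 / 16 : ℝ) ^ 6) := by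
      rw [Real.log_pow]; push_cast; ring
    have hle : Real.log ((17 / 16 : ℝ) ^ 6) ≤ Real.log 2 :=
      Real.log_le_log (by positivity) (by norm_num)
    linarith
  have habs : |Real.log (y k) - 2 * Real.log (y (k - 1))| ≤ Real.log (17 / 16) := by
    rw [← hlogdiv, abs_le]
    constructor
    · have hl : Real.log (16 / 17 : ℝ) ≤ Real.log (y k / (y (k - 1)) ^ 2) :=
        Real.log_le_log (by norm_num) hrat2
      have hinv : Real.log (16 / 17 : ℝ) = -Real.log (17 / 16 : ℝ) := by
        rw [← Real.log_inv]; norm_num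
      linarith
    · exact Real.log_le_log (by positivity) hrat1
  have hL : Real.log (y 0) < 0 := Real.log_neg h0 (by linarith)
  have hlog2pos : 0 < Real.log 2 := Real.log_pos (by norm_num)
  have hL2 : Real.log 2 ≤ |Real.log (y 0)| := by
    rw [abs_of_neg hL, ← Real.log_inv]
    apply Real.log_le_log (by norm_num)
    rw [le_inv_comm₀ (by norm_num) h0]
    linarith
  have hrw : Real.log (y k) / Real.log (y 0) - 2 * (Real.log (y (k - 1)) / Real.log (y 0))
      = (Real.log (y k) - 2 * Real.log (y (k - 1))) / Real.log (y 0) := by ring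
  rw [hrw, abs_div]
  calc |Real.log (y k) - 2 * Real.log (y (k - 1))| / |Real.log (y 0)|
      ≤ (Real.log 2 / 6) / Real.log 2 :=
        div_le_div₀ (by linarith) (le_trans habs hlog1716) hlog2pos hL2
    _ = 1 / 6 := by field_simp
end

section
/- Let phi : R^n -> Prop define a set S = {x : phi x}, and suppose for all x,y in S and all t in [0,1], t*x + (1-t)*y is in S. Let T be the boundary of the cube [-1,1]^n, i.e., T = {x in [-1,1]^n : exists i, |x_i| = 1}, and let f : R^n -> R be continuous. If n >= 2 and the set S' = {x in (-1,1)^n : f(x) > 0} ∪ T is convex, then f(x) > 0 for all x in (-1,1)^n. Conversely, if f(x) > 0 for all x in (-1,1)^n then S' = [-1,1]^n, hence convex. -/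
theorem stmt_15 (n : ℕ) (hn : 2 ≤ n) (f : EuclideanSpace ℝ (Fin n) → ℝ)
    (hf : Continuous f)
    (T : Set (EuclideanSpace ℝ (Fin n)))
    (hT : T = {x | (∀ i, x i ∈ Set.Icc (-1 : ℝ) 1) ∧ ∃ i, |x i| = 1})
    (S' : Set (EuclideanSpace ℝ (Fin n)))
    (hS' : S' = {x | (∀ i, x i ∈ Set.Ioo (-1 : ℝ) 1) ∧ 0 < f x} ∪ T) :
    (Convex ℝ S' → ∀ x : EuclideanSpace ℝ (Fin n),
        (∀ i, x i ∈ Set.Ioo (-1 : ℝ) 1) → 0 < f x) ∧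
    ((∀ x : EuclideanSpace ℝ (Fin n), (∀ i, x i ∈ Set.Ioo (-1 : ℝ) 1) → 0 < f x) →
        S' = {x | ∀ i, x i ∈ Set.Icc (-1 : ℝ) 1}) := by
  subst hT hS'
  constructor
  · intro hconv x hx
    have hn0 : 0 < n := by omega
    set i0 : Fin n := ⟨0, hn0⟩ with hi0
    set a : EuclideanSpace ℝ (Fin n) := WithLp.toLp 2 (Function.update x i0 1) with ha
    set b : EuclideanSpace ℝ (Fin n) := WithLp.toLp 2 (Function.update x i0 (-1)) with hb
    have haT : a ∈ {x : EuclideanSpace ℝ (Fin n) |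
        (∀ i, x i ∈ Set.Ioo (-1 : ℝ) 1) ∧ 0 < f x} ∪
        {x | (∀ i, x i ∈ Set.Icc (-1 : ℝ) 1) ∧ ∃ i, |x i| = 1} := by
      right
      refine ⟨fun i => ?_, ⟨i0, ?_⟩⟩
      · by_cases h : i = i0
        · subst h; simp [ha]
        · simp only [ha, PiLp.toLp_apply, Function.update_of_ne h]
          exact ⟨(hx i).1.le, (hx i).2.le⟩
      · simp [ha]
    have hbT : b ∈ {x : EuclideanSpace ℝ (Fin n) |
        (∀ i, x i ∈ Set.Ioo (-1 : ℝ) 1) ∧ 0 < f x} ∪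
        {x | (∀ i, x i ∈ Set.Icc (-1 : ℝ) 1) ∧ ∃ i, |x i| = 1} := by
      right
      refine ⟨fun i => ?_, ⟨i0, ?_⟩⟩
      · by_cases h : i = i0
        · subst h; simp [hb]
        · simp only [hb, PiLp.toLp_apply, Function.update_of_ne h]
          exact ⟨(hx i).1.le, (hx i).2.le⟩
      · simp [hb]
    set t : ℝ := (x i0 + 1) / 2 with htdef
    have hx0 := hx i0
    have ht0 : 0 ≤ t := by
      have := hx0.1; simp only [htdef]; linarith
    have ht1 : 1 - t ≥ 0 := by
      have := hx0.2; simp only [htdef]; linarith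
    have key : t • a + (1 - t) • b = x := by
      ext i
      have hcoord : (t • a + (1 - t) • b) i = t * a i + (1 - t) * b i := rfl
      rw [hcoord]
      by_cases h : i = i0
      · subst h
        simp only [ha, hb, PiLp.toLp_apply, Function.update_self, htdef]
        ring
      · simp only [ha, hb, PiLp.toLp_apply, Function.update_of_ne h]
        ring
    have hx' := hconv haT hbT ht0 ht1 (by ring)
    rw [key] at hx'
    rcases hx' with ⟨_, hpos⟩ | ⟨_, i, hi⟩
    · exact hpos
    · have := hx i
      have h1 : |x i| < 1 := abs_lt.mpr this
      linarith [hi ▸ h1]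
  · intro hpos
    ext x
    simp only [Set.mem_union, Set.mem_setOf_eq]
    constructor
    · rintro (⟨h, _⟩ | ⟨h, _⟩)
      · exact fun i => ⟨(h i).1.le, (h i).2.le⟩
      · exact h
    · intro h
      by_cases hb : ∃ i, |x i| = 1
      · exact Or.inr ⟨h, hb⟩
      · push_neg at hb
        have hio : ∀ i, x i ∈ Set.Ioo (-1 : ℝ) 1 := by
          intro i
          have h1 : |x i| ≤ 1 := abs_le.mpr ⟨(h i).1, (h i).2⟩
          have h2 : |x i| < 1 := lt_of_le_of_ne h1 (hb i)
          exact abs_lt.mp h2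
        exact Or.inl ⟨hio, hpos x hio⟩
end

section
/- Let S be a subset of R^d and r >= 0. There exists x in R^d such that ||x - y|| <= r for all y in S if and only if for every d+1 points y_1, ..., y_{d+1} in S there exists x in R^d with ||x - y_k|| <= r for all k in {1,...,d+1}. -/
theorem stmt_17 (d : ℕ) (S : Set (EuclideanSpace ℝ (Fin d))) (r : ℝ) (hr : 0 ≤ r) :
    (∃ x : EuclideanSpace ℝ (Fin d), ∀ y ∈ S, ‖x - y‖ ≤ r) ↔
      ∀ y : Fin (d + 1) → EuclideanSpace ℝ (Fin d), (∀ k, y k ∈ S) →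
        ∃ x : EuclideanSpace ℝ (Fin d), ∀ k, ‖x - y k‖ ≤ r := by
  classical
  constructor
  · rintro ⟨x, hx⟩ y hy
    exact ⟨x, fun k => hx _ (hy k)⟩
  · intro h
    have hfin : Module.finrank ℝ (EuclideanSpace ℝ (Fin d)) = d := by
      simp [finrank_euclideanSpace]
    have := Convex.helly_theorem_compact' (𝕜 := ℝ)
      (F := fun y : S => Metric.closedBall (y : EuclideanSpace ℝ (Fin d)) r)
      (fun i => convex_closedBall _ _)
      (fun i => isCompact_closedBall _ _)
      ?_
    · obtain ⟨x, hx⟩ := this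
      refine ⟨x, fun y hy => ?_⟩
      have := Set.mem_iInter.mp hx ⟨y, hy⟩
      simpa [Metric.mem_closedBall, dist_eq_norm] using this
    · intro I hI
      rw [hfin] at hI
      rcases I.eq_empty_or_nonempty with rfl | ⟨i0, hi0⟩
      · simp
      · set l := I.toList with hl
        have hlen : l.length ≤ d + 1 := by
          rw [hl, Finset.length_toList]; exact hI
        let y : Fin (d + 1) → EuclideanSpace ℝ (Fin d) := fun k => (l.getD k i0 : _)
        have hymem : ∀ k, y k ∈ S := by
          intro k
          by_cases hk : (k : ℕ) < l.length
          · have : l.getD k i0 = l.get ⟨k, hk⟩ := List.getD_eq_get l i0 ⟨k, hk⟩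
            have hmem : l.get ⟨k, hk⟩ ∈ I := by
              rw [← Finset.mem_toList]; exact List.get_mem _ _
            simp only [y, this]
            exact ((l.get ⟨k, hk⟩) : S).2
          · have : l.getD k i0 = i0 := List.getD_eq_default l i0 (le_of_not_gt hk)
            simp only [y, this]
            exact (i0 : S).2
        obtain ⟨x, hx⟩ := h y hymem
        refine ⟨x, Set.mem_iInter₂.mpr fun i hi => ?_⟩
        have : i ∈ l := by rw [hl, Finset.mem_toList]; exact hi
        obtain ⟨m, hm⟩ := List.get_of_mem this
        obtain ⟨n, hn⟩ := m
        have hni := hm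
        have hk : (⟨n, lt_of_lt_of_le hn hlen⟩ : Fin (d+1)) = (⟨n, lt_of_lt_of_le hn hlen⟩ : Fin (d+1)) := rfl
        have hyi : y ⟨n, lt_of_lt_of_le hn hlen⟩ = (i : EuclideanSpace ℝ (Fin d)) := by
          simp only [y]
          rw [List.getD_eq_get l i0 ⟨n, hn⟩, hni]
        have := hx ⟨n, lt_of_lt_of_le hn hlen⟩
        rw [hyi] at this
        simpa [Metric.mem_closedBall, dist_eq_norm] using this
end

section
/- Let y_1, ..., y_{d+1} be points in R^d and r >= 0. There exists x in R^d with ||x - y_k||^2 <= r^2 for all k in {1,...,d+1} if and only if for all nonnegative reals z_1,...,z_{d+1} with sum_{k} z_k = 1, one has sum_{k=1}^{d+1} sum_{l=1}^{d+1} z_k * z_l * ||y_k - y_l||^2 <= 2*r^2. -/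
open Finset

local notation "⟪" x ", " y "⟫" => @inner ℝ _ _ x y

lemma key_identity {d n : ℕ} (z : Fin n → ℝ) (hz : ∑ k, z k = 1)
    (y : Fin n → EuclideanSpace ℝ (Fin d)) :
    ∑ k, ∑ l, z k * z l * ‖y k - y l‖ ^ 2
      = 2 * ∑ k, z k * ‖y k‖ ^ 2 - 2 * ‖∑ k, z k • y k‖ ^ 2 := by
  have hnorm : ‖∑ k, z k • y k‖ ^ 2 = ∑ k, ∑ l, z k * z l * ⟪y k, y l⟫ := by
    rw [← real_inner_self_eq_norm_sq, sum_inner]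
    refine Finset.sum_congr rfl fun k _ => ?_
    rw [real_inner_smul_left, inner_sum, Finset.mul_sum]
    refine Finset.sum_congr rfl fun l _ => ?_
    rw [real_inner_smul_right]; ring
  have expand : ∑ k, ∑ l, z k * z l * ‖y k - y l‖ ^ 2
      = ∑ k, ∑ l, (z k * z l * ‖y k‖ ^ 2 + z k * z l * ‖y l‖ ^ 2
          - 2 * (z k * z l * ⟪y k, y l⟫)) := by
    refine Finset.sum_congr rfl fun k _ => Finset.sum_congr rfl fun l _ => ?_
    rw [norm_sub_sq_real]; ring
  have t1 : ∑ k, ∑ l, z k * z l * ‖y k‖ ^ 2 = ∑ k, z k * ‖y k‖ ^ 2 := by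
    refine Finset.sum_congr rfl fun k _ => ?_
    calc ∑ l, z k * z l * ‖y k‖ ^ 2 = (z k * ‖y k‖ ^ 2) * ∑ l, z l := by
          rw [Finset.mul_sum]; exact Finset.sum_congr rfl fun l _ => by ring
      _ = z k * ‖y k‖ ^ 2 := by rw [hz, mul_one]
  have t2 : ∑ k, ∑ l, z k * z l * ‖y l‖ ^ 2 = ∑ l, z l * ‖y l‖ ^ 2 := by
    rw [Finset.sum_comm]
    refine Finset.sum_congr rfl fun l _ => ?_
    calc ∑ k, z k * z l * ‖y l‖ ^ 2 = (z l * ‖y l‖ ^ 2) * ∑ k, z k := by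
          rw [Finset.mul_sum]; exact Finset.sum_congr rfl fun k _ => by ring
      _ = z l * ‖y l‖ ^ 2 := by rw [hz, mul_one]
  calc ∑ k, ∑ l, z k * z l * ‖y k - y l‖ ^ 2
      = (∑ k, ∑ l, z k * z l * ‖y k‖ ^ 2) + (∑ k, ∑ l, z k * z l * ‖y l‖ ^ 2)
          - 2 * (∑ k, ∑ l, z k * z l * ⟪y k, y l⟫) := by
        rw [expand]
        simp_rw [Finset.sum_sub_distrib, Finset.sum_add_distrib, ← Finset.mul_sum]
    _ = 2 * ∑ k, z k * ‖y k‖ ^ 2 - 2 * ‖∑ k, z k • y k‖ ^ 2 := by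
        rw [t1, t2, hnorm]; ring

theorem stmt_18 (d : ℕ) (y : Fin (d + 1) → EuclideanSpace ℝ (Fin d)) (r : ℝ) (hr : 0 ≤ r) :
    (∃ x : EuclideanSpace ℝ (Fin d), ∀ k, ‖x - y k‖ ^ 2 ≤ r ^ 2) ↔
      ∀ z : Fin (d + 1) → ℝ, (∀ k, 0 ≤ z k) → ∑ k, z k = 1 →
        ∑ k, ∑ l, z k * z l * ‖y k - y l‖ ^ 2 ≤ 2 * r ^ 2 := by
  constructor
  · rintro ⟨x, hx⟩ z hz0 hz1
    have hkey := key_identity z hz1 (fun k => y k - x)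
    have e : ∑ k, ∑ l, z k * z l * ‖y k - y l‖ ^ 2
        = 2 * ∑ k, z k * ‖y k - x‖ ^ 2 - 2 * ‖∑ k, z k • (y k - x)‖ ^ 2 := by
      rw [← hkey]
      exact Finset.sum_congr rfl fun k _ => Finset.sum_congr rfl fun l _ => by
        rw [sub_sub_sub_cancel_right]
    have h2 : ∑ k, z k * ‖y k - x‖ ^ 2 ≤ r ^ 2 := by
      calc ∑ k, z k * ‖y k - x‖ ^ 2 ≤ ∑ k, z k * r ^ 2 :=
            Finset.sum_le_sum fun k _ =>
              mul_le_mul_of_nonneg_left (by rw [norm_sub_rev]; exact hx k) (hz0 k)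
        _ = r ^ 2 := by rw [← Finset.sum_mul, hz1, one_mul]
    have h3 : (0:ℝ) ≤ ‖∑ k, z k • (y k - x)‖ ^ 2 := sq_nonneg _
    rw [e]; linarith
  · intro h
    set f : (Fin (d+1) → ℝ) → ℝ :=
      fun z => ∑ k, z k * ‖y k‖ ^ 2 - ‖∑ k, z k • y k‖ ^ 2 with hf
    have hcont : ContinuousOn f (stdSimplex ℝ (Fin (d+1))) := by
      apply Continuous.continuousOn
      apply Continuous.sub
      · exact continuous_finset_sum _ fun k _ => (continuous_apply k).mul continuous_const
      · exact ((continuous_finset_sum _ fun k _ =>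
          (continuous_apply k).smul continuous_const).norm.pow 2)
    have hne : (stdSimplex ℝ (Fin (d+1))).Nonempty :=
      ⟨Pi.single 0 1, single_mem_stdSimplex ℝ 0⟩
    obtain ⟨z, hzmem, hzmax⟩ := (isCompact_stdSimplex ℝ _).exists_isMaxOn hne hcont
    obtain ⟨hz0, hz1⟩ := hzmem
    set c := ∑ k, z k • y k with hc
    set M := f z with hM
    have hMval : M = ∑ k, z k * ‖y k‖ ^ 2 - ‖c‖ ^ 2 := rfl
    have hM_le : M ≤ r ^ 2 := by
      have h1 := h z hz0 hz1
      have hkey := key_identity z hz1 y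
      rw [← hc] at hkey
      linarith
    refine ⟨c, fun k => ?_⟩
    have hCM : ‖y k - c‖ ^ 2 ≤ M := by
      set B := ‖y k - c‖ ^ 2 - M with hB
      have hC : (0:ℝ) ≤ ‖y k - c‖ ^ 2 := sq_nonneg _
      have hstep : ∀ t : ℝ, 0 < t → t ≤ 1 → B ≤ t * ‖y k - c‖ ^ 2 := by
        intro t ht0 ht1
        have hmem : (1-t) • z + t • (Pi.single k 1 : Fin (d+1) → ℝ)
            ∈ stdSimplex ℝ (Fin (d+1)) :=
          (convex_stdSimplex ℝ _) ⟨hz0, hz1⟩ (single_mem_stdSimplex ℝ k)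
            (by linarith) ht0.le (by ring)
        have hle : f ((1-t) • z + t • (Pi.single k 1 : Fin (d+1) → ℝ)) ≤ M := hzmax hmem
        have e1 : ∑ j, ((1-t) • z + t • (Pi.single k 1 : Fin (d+1) → ℝ)) j * ‖y j‖ ^ 2
            = (1-t) * ∑ j, z j * ‖y j‖ ^ 2 + t * ‖y k‖ ^ 2 := by
          simp only [Pi.add_apply, Pi.smul_apply, smul_eq_mul, add_mul, Finset.sum_add_distrib,
            Finset.mul_sum, Pi.single_apply]
          congr 1
          · exact Finset.sum_congr rfl fun j _ => by ring
          · rw [Finset.sum_eq_single k]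
            · simp
            · intro j _ hj; simp [hj]
            · intro hk; exact absurd (Finset.mem_univ k) hk
        have e2 : ∑ j, ((1-t) • z + t • (Pi.single k 1 : Fin (d+1) → ℝ)) j • y j
            = c + t • (y k - c) := by
          simp only [Pi.add_apply, Pi.smul_apply, smul_eq_mul, add_smul, Finset.sum_add_distrib,
            Pi.single_apply]
          rw [show ∑ j, (t * if j = k then (1:ℝ) else 0) • y j = t • y k by
            rw [Finset.sum_eq_single k]
            · simp
            · intro j _ hj; simp [hj]
            · intro hk; exact absurd (Finset.mem_univ k) hk]
          rw [show ∑ j, ((1-t) * z j) • y j = (1-t) • c by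
            rw [hc, Finset.smul_sum]
            exact Finset.sum_congr rfl fun j _ => (smul_smul _ _ _).symm]
          rw [smul_sub, sub_smul, one_smul]
          abel
        have e3 : ‖c + t • (y k - c)‖ ^ 2
            = ‖c‖ ^ 2 + 2 * t * ⟪c, y k - c⟫ + t ^ 2 * ‖y k - c‖ ^ 2 := by
          rw [norm_add_sq_real, real_inner_smul_right, norm_smul]
          simp [abs_of_pos ht0]
          ring
        have eB : B = ‖y k‖ ^ 2 - (∑ j, z j * ‖y j‖ ^ 2) - 2 * ⟪c, y k - c⟫ := by
          rw [hB, hMval, norm_sub_sq_real, inner_sub_right, real_inner_self_eq_norm_sq,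
            real_inner_comm]
          ring
        rw [hf] at hle
        simp only [e1] at hle
        rw [e2, e3] at hle
        have ht2 : t * B ≤ t ^ 2 * ‖y k - c‖ ^ 2 := by rw [eB]; nlinarith [hle]
        have := (mul_le_mul_iff_of_pos_left ht0).mp (by nlinarith [ht2] : t * B ≤ t * (t * ‖y k - c‖ ^ 2))
        linarith [this]
      by_contra h'
      push_neg at h'
      have hB' : 0 < B := by simp only [hB]; linarith
      rcases eq_or_lt_of_le hC with hC0 | hC0
      · have := hstep 1 one_pos le_rfl
        rw [← hC0] at this; simp at this; linarith
      · set t := min 1 (B / (2 * ‖y k - c‖ ^ 2)) with ht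
        have ht0 : 0 < t := lt_min one_pos (div_pos hB' (by linarith))
        have h1 := hstep t ht0 (min_le_left _ _)
        have h2 : t * ‖y k - c‖ ^ 2 ≤ B / 2 := by
          calc t * ‖y k - c‖ ^ 2 ≤ (B / (2 * ‖y k - c‖ ^ 2)) * ‖y k - c‖ ^ 2 :=
                mul_le_mul_of_nonneg_right (min_le_right _ _) hC
            _ = B / 2 := by rw [div_mul_eq_mul_div, mul_div_mul_right _ _ hC0.ne']
        linarith
    calc ‖c - y k‖ ^ 2 = ‖y k - c‖ ^ 2 := by rw [norm_sub_rev]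
      _ ≤ M := hCM
      _ ≤ r ^ 2 := hM_le
end

section
/- Let f : R^n × R^m -> R be continuous, and define g : R^n × R^m × R × R -> R^n × R by g(x,y,s,t) = (x, s - (s*f(x,y))^2 - t^2). Suppose that for every x in [-1,1]^n there exists y in [-1,1]^m with f(x,y) = 0. Then for every x in [-1,1]^n and every c in R there exist y in [-1,1]^m and s,t in R with g(x,y,s,t) = (x,c). Conversely, if there exists x in [-1,1]^n with f(x,y) != 0 for all y in [-1,1]^m, then there exists c in R such that (x,c) is not in the image of ([-1,1]^n × [-1,1]^m × R × R) under g. -/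
theorem stmt_19 (n m : ℕ)
    (f : EuclideanSpace ℝ (Fin n) × EuclideanSpace ℝ (Fin m) → ℝ) (hf : Continuous f)
    (g : EuclideanSpace ℝ (Fin n) × EuclideanSpace ℝ (Fin m) × ℝ × ℝ →
        EuclideanSpace ℝ (Fin n) × ℝ)
    (hg : ∀ x y s t, g (x, y, s, t) = (x, s - (s * f (x, y)) ^ 2 - t ^ 2)) :
    ((∀ x : EuclideanSpace ℝ (Fin n), (∀ i, x i ∈ Set.Icc (-1 : ℝ) 1) →
        ∃ y : EuclideanSpace ℝ (Fin m), (∀ j, y j ∈ Set.Icc (-1 : ℝ) 1) ∧ f (x, y) = 0) →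
      ∀ x : EuclideanSpace ℝ (Fin n), (∀ i, x i ∈ Set.Icc (-1 : ℝ) 1) → ∀ c : ℝ,
        ∃ y : EuclideanSpace ℝ (Fin m), (∀ j, y j ∈ Set.Icc (-1 : ℝ) 1) ∧
          ∃ s t : ℝ, g (x, y, s, t) = (x, c)) ∧
    ((∃ x : EuclideanSpace ℝ (Fin n), (∀ i, x i ∈ Set.Icc (-1 : ℝ) 1) ∧
        ∀ y : EuclideanSpace ℝ (Fin m), (∀ j, y j ∈ Set.Icc (-1 : ℝ) 1) → f (x, y) ≠ 0) →
      ∃ x : EuclideanSpace ℝ (Fin n), (∀ i, x i ∈ Set.Icc (-1 : ℝ) 1) ∧ ∃ c : ℝ,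
        ∀ x' : EuclideanSpace ℝ (Fin n), (∀ i, x' i ∈ Set.Icc (-1 : ℝ) 1) →
        ∀ y : EuclideanSpace ℝ (Fin m), (∀ j, y j ∈ Set.Icc (-1 : ℝ) 1) →
        ∀ s t : ℝ, g (x', y, s, t) ≠ (x, c)) := by
  constructor
  · intro h x hx c
    obtain ⟨y, hy, hfy⟩ := h x hx
    exact ⟨y, hy, c, 0, by rw [hg]; simp [hfy]⟩
  · rintro ⟨x, hx, hne⟩
    -- K is the cube in ℝ^m
    set K : Set (EuclideanSpace ℝ (Fin m)) := {y | ∀ j, y j ∈ Set.Icc (-1 : ℝ) 1} with hK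
    have hKc : IsCompact K := by
      have : K = WithLp.toLp 2 '' Set.pi Set.univ (fun _ : Fin m => Set.Icc (-1 : ℝ) 1) := by
        ext y
        constructor
        · intro hy
          exact ⟨WithLp.ofLp y, Set.mem_univ_pi.mpr hy, rfl⟩
        · rintro ⟨z, hz, rfl⟩
          exact Set.mem_univ_pi.mp hz
      rw [this]
      exact (isCompact_univ_pi fun _ => isCompact_Icc).image (PiLp.continuous_toLp 2 _)
    have hKne : K.Nonempty := ⟨0, fun j => by norm_num⟩
    have hcont : ContinuousOn (fun y => (f (x, y)) ^ 2) K :=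
      ((hf.comp (Continuous.prodMk_right x)).pow 2).continuousOn
    obtain ⟨y₀, hy₀K, hmin⟩ := hKc.exists_isMinOn hKne hcont
    set ε := (f (x, y₀)) ^ 2 with hε
    have hεpos : 0 < ε := by
      have := hne y₀ hy₀K
      positivity
    refine ⟨x, hx, 1 / (4 * ε) + 1, fun x' hx' y hy s t heq => ?_⟩
    rw [hg] at heq
    have hx'x : x' = x := congrArg Prod.fst heq
    subst hx'x
    have h2 : s - (s * f (x', y)) ^ 2 - t ^ 2 = 1 / (4 * ε) + 1 := congrArg Prod.snd heq
    have hεle : ε ≤ (f (x', y)) ^ 2 := hmin hy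
    have hle : s - (s * f (x', y)) ^ 2 - t ^ 2 ≤ 1 / (4 * ε) := by
      have h1 : s - ε * s ^ 2 ≤ 1 / (4 * ε) := by
        have key : 0 ≤ ε * (s - 1 / (2 * ε)) ^ 2 := by positivity
        have : ε * (s - 1 / (2 * ε)) ^ 2 = ε * s ^ 2 - s + 1 / (4 * ε) := by
          field_simp
          ring
        nlinarith
      have h3 : ε * s ^ 2 ≤ (s * f (x', y)) ^ 2 := by
        have := mul_le_mul_of_nonneg_right hεle (sq_nonneg s)
        nlinarith [sq_nonneg s]
      nlinarith [sq_nonneg t]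
    linarith
end
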